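/- Let γ ≥ 1, μ > 0, v₊ > 1, 0 < ε with v₋^ε := 1 + ε^{1/γ} < v₊, and let v̄_ε : ℝ → (v₋^ε, v₊) be a differentiable function satisfying v̄_ε'(x) = (v̄_ε(x)/(μ s_ε)) Φ_ε(v̄_ε(x)) for all x, where p_ε, s_ε, Φ_ε are as in the soft-congestion setting. Then for all x ∈ ℝ: 0 < v̄_ε'(x) ≤ s_ε v₊ (v₊ − 1)/μ, and moreover s_ε² ≤ 1/(v₊ − 1 − ε^{1/γ}); in particular the profiles v̄_ε are uniformly Lipschitz as ε → 0. -/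

import Mathlib

open Set

lemma pe_hasDerivAt (ε γ : ℝ) {v : ℝ} (hv : 1 < v) :
    HasDerivAt (fun u : ℝ => ε * (u - 1) ^ (-γ)) (ε * (-γ * (v - 1) ^ (-γ - 1))) v := by
  have h1 : HasDerivAt (fun u : ℝ => u - 1) 1 v := (hasDerivAt_id v).sub_const 1
  have h2 : HasDerivAt (fun y : ℝ => y ^ (-γ)) (-γ * (v - 1) ^ (-γ - 1)) (v - 1) :=
    Real.hasDerivAt_rpow_const (Or.inl (by linarith))
  have := (h2.comp v h1).const_mul ε
  simpa using this

lemma pe_strictConvex (ε γ : ℝ) (hε : 0 < ε) (hγ : 1 ≤ γ) :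
    StrictConvexOn ℝ (Ioi (1:ℝ)) (fun u : ℝ => ε * (u - 1) ^ (-γ)) := by
  apply strictConvexOn_of_deriv2_pos (convex_Ioi 1)
  · intro v hv
    exact ((pe_hasDerivAt ε γ hv).continuousAt).continuousWithinAt
  · intro v hv
    rw [interior_Ioi] at hv
    have hv1 : (0:ℝ) < v - 1 := by simpa using sub_pos.mpr (mem_Ioi.mp hv)
    have hd1 : ∀ u ∈ Ioi (1:ℝ), deriv (fun u : ℝ => ε * (u - 1) ^ (-γ)) u
        = ε * (-γ * (u - 1) ^ (-γ - 1)) := fun u hu => (pe_hasDerivAt ε γ hu).deriv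
    have hev : deriv (fun u : ℝ => ε * (u - 1) ^ (-γ))
        =ᶠ[nhds v] (fun u => ε * (-γ * (u - 1) ^ (-γ - 1))) := by
      filter_upwards [isOpen_Ioi.mem_nhds hv] with u hu using hd1 u hu
    have h2 : HasDerivAt (fun u : ℝ => ε * (u - 1) ^ (-γ))
        (ε * (-γ * (v - 1) ^ (-γ - 1))) v := pe_hasDerivAt ε γ hv
    have hg : HasDerivAt (fun u : ℝ => ε * (-γ * (u - 1) ^ (-γ - 1)))
        (ε * -γ * ((-γ - 1) * (v - 1) ^ (-γ - 1 - 1))) v := by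
      have h1 : HasDerivAt (fun u : ℝ => u - 1) 1 v := (hasDerivAt_id v).sub_const 1
      have h2 : HasDerivAt (fun y : ℝ => y ^ (-γ - 1)) ((-γ - 1) * (v - 1) ^ (-γ - 1 - 1))
          (v - 1) := Real.hasDerivAt_rpow_const (Or.inl hv1.ne')
      have := (h2.comp v h1).const_mul (ε * -γ)
      simpa [mul_assoc] using this
    have : (deriv^[2] (fun u : ℝ => ε * (u - 1) ^ (-γ))) v
        = ε * -γ * ((-γ - 1) * (v - 1) ^ (-γ - 1 - 1)) := by
      simp only [Function.iterate_succ, Function.iterate_zero, Function.comp_apply, id]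
      rw [hev.deriv_eq]
      exact hg.deriv
    rw [this]
    have hpow : (0:ℝ) < (v - 1) ^ (-γ - 1 - 1) := Real.rpow_pos_of_pos hv1 _
    have heq : ε * -γ * ((-γ - 1) * (v - 1) ^ (-γ - 1 - 1))
        = ε * (γ * (γ + 1)) * ((v - 1) ^ (-γ - 1 - 1)) := by ring
    rw [heq]
    have hγ0 : (0:ℝ) < γ := by linarith
    exact mul_pos (mul_pos hε (mul_pos hγ0 (by linarith))) hpow

theorem stmt8 (γ μ vp ε : ℝ) (hγ : 1 ≤ γ) (hμ : 0 < μ) (hvp : 1 < vp) (hε : 0 < ε)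
    (pe : ℝ → ℝ) (hpe : ∀ v : ℝ, pe v = ε * (v - 1) ^ (-γ))
    (vm : ℝ) (hvm : vm = 1 + ε ^ (1 / γ)) (hlt : vm < vp)
    (se : ℝ) (hse : se = Real.sqrt ((pe vm - pe vp) / (vp - vm)))
    (Φ : ℝ → ℝ) (hΦ : ∀ v : ℝ, Φ v = se ^ 2 * (vp - v) + pe vp - pe v)
    (vb : ℝ → ℝ)
    (hrange : ∀ x : ℝ, vb x ∈ Ioo vm vp)
    (hode : ∀ x : ℝ, HasDerivAt vb (vb x / (μ * se) * Φ (vb x)) x) :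
    (∀ x : ℝ, 0 < deriv vb x ∧ deriv vb x ≤ se * vp * (vp - 1) / μ) ∧
    se ^ 2 ≤ 1 / (vp - 1 - ε ^ (1 / γ)) := by
  have hγ0 : (0:ℝ) < γ := by linarith
  have hεγ : (0:ℝ) < ε ^ (1 / γ) := Real.rpow_pos_of_pos hε _
  have hvm1 : 1 < vm := by rw [hvm]; linarith
  -- pe vm = 1
  have hpm : pe vm = 1 := by
    rw [hpe, hvm]
    have : (1 + ε ^ (1 / γ) - 1) = ε ^ (1 / γ) := by ring
    rw [this, ← Real.rpow_mul hε.le, show (1 / γ) * (-γ) = -1 by field_simp,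
      Real.rpow_neg_one, mul_inv_cancel₀ hε.ne']
  have hpvp_pos : 0 < pe vp := by
    rw [hpe]
    exact mul_pos hε (Real.rpow_pos_of_pos (by linarith) _)
  have hpvp_lt : pe vp < pe vm := by
    rw [hpe, hpe]
    have h1 : (0:ℝ) < vm - 1 := by linarith
    exact mul_lt_mul_of_pos_left
      (Real.rpow_lt_rpow_of_neg h1 (by linarith) (by linarith)) hε
  have hden : (0:ℝ) < vp - vm := by linarith
  have hfrac_pos : 0 < (pe vm - pe vp) / (vp - vm) := div_pos (by linarith) hden
  have hse2 : se ^ 2 = (pe vm - pe vp) / (vp - vm) := by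
    rw [hse, Real.sq_sqrt hfrac_pos.le]
  have hsepos : 0 < se := by
    rw [hse]; exact Real.sqrt_pos.mpr hfrac_pos
  constructor
  · intro x
    obtain ⟨hv1, hv2⟩ := hrange x
    set v := vb x with hvdef
    have hv0 : 0 < v := by linarith
    have hderiv : deriv vb x = v / (μ * se) * Φ v := (hode x).deriv
    -- strict convexity gives Φ v > 0
    have hconv := pe_strictConvex ε γ hε hγ
    have hab : (vp - v) / (vp - vm) + (v - vm) / (vp - vm) = 1 := by
      field_simp; ring
    have ha : 0 < (vp - v) / (vp - vm) := div_pos (by linarith) hden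
    have hb : 0 < (v - vm) / (vp - vm) := div_pos (by linarith) hden
    have hcomb : ((vp - v) / (vp - vm)) • vm + ((v - vm) / (vp - vm)) • vp = v := by
      simp only [smul_eq_mul]; field_simp; ring
    have hkey := hconv.2 (show vm ∈ Ioi (1:ℝ) from hvm1) (show vp ∈ Ioi (1:ℝ) from hvp)
      (by linarith : vm ≠ vp) ha hb hab
    rw [hcomb] at hkey
    simp only [smul_eq_mul] at hkey
    rw [← hpe, ← hpe, ← hpe] at hkey
    have hΦpos : 0 < Φ v := by
      rw [hΦ, hse2]
      have : (pe vm - pe vp) / (vp - vm) * (vp - v)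
          = (vp - v) / (vp - vm) * pe vm + (v - vm) / (vp - vm) * pe vp
            - pe vp := by
        field_simp; ring
      rw [this]
      linarith
    constructor
    · rw [hderiv]
      exact mul_pos (div_pos hv0 (mul_pos hμ hsepos)) hΦpos
    · rw [hderiv]
      have hΦle : Φ v ≤ se ^ 2 * (vp - v) := by
        rw [hΦ]
        have : pe vp ≤ pe v := by
          rw [hpe, hpe]
          exact le_of_lt (mul_lt_mul_of_pos_left
            (Real.rpow_lt_rpow_of_neg (by linarith) (by linarith) (by linarith)) hε)
        linarith
      have h1 : v / (μ * se) * Φ v ≤ v / (μ * se) * (se ^ 2 * (vp - v)) := by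
        apply mul_le_mul_of_nonneg_left hΦle
        positivity
      calc v / (μ * se) * Φ v ≤ v / (μ * se) * (se ^ 2 * (vp - v)) := h1
        _ = v * se * (vp - v) / μ := by
            field_simp
        _ ≤ se * vp * (vp - 1) / μ := by
            apply div_le_div_of_nonneg_right ?_ hμ.le
            have h2 : v * (vp - v) ≤ vp * (vp - 1) :=
              mul_le_mul hv2.le (by linarith) (by linarith) (by linarith)
            nlinarith [mul_le_mul_of_nonneg_left h2 hsepos.le]
  · rw [hse2, hpm, hvm]
    have : vp - (1 + ε ^ (1 / γ)) = vp - 1 - ε ^ (1 / γ) := by ring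
    rw [this]
    apply div_le_div_of_nonneg_right ?_ (by linarith : (0:ℝ) ≤ vp - 1 - ε ^ (1 / γ))
    linarith
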